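/- Let r be a point on the x-axis and p a point of the plane. For every point s with s₁ < p₁ (i.e. s ∈ H_p^L) satisfying dist(r,s) < dist(r,p) (i.e. s lies in the interior of H_p^L ∩ D_p(r)), there exists a unique point c on the x-axis with dist(c,p) = dist(c,s); moreover this c satisfies c₁ > r₁, i.e. the center of the unique circle centered on the x-axis passing through p and s lies strictly to the right of r. -/

import Mathlib

lemma dist_sq_two (x y : EuclideanSpace ℝ (Fin 2)) :
    dist x y ^ 2 = (x 0 - y 0) ^ 2 + (x 1 - y 1) ^ 2 := by
  rw [EuclideanSpace.dist_eq, Real.sq_sqrt (by positivity)]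
  simp [Fin.sum_univ_two, Real.dist_eq, sq_abs]

lemma dist_eq_iff_sq (x y z : EuclideanSpace ℝ (Fin 2)) :
    dist x y = dist x z ↔ dist x y ^ 2 = dist x z ^ 2 := by
  constructor
  · intro h; rw [h]
  · intro h; exact (sq_eq_sq₀ dist_nonneg dist_nonneg).mp h

/-- Lemma 1(ii), first item: for a point `s` strictly to the left of `p`
lying in the interior of the disk centered at `r` (on the x-axis) through `p`,
there is a unique point `c` on the x-axis equidistant from `p` and `s`, and it
lies strictly to the right of `r`. -/
theorem unique_center_left_halfplane_inside_disk
    (r p s : EuclideanSpace ℝ (Fin 2))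
    (hr : r 1 = 0) (hs : s 0 < p 0) (hsd : dist r s < dist r p) :
    ∃ c : EuclideanSpace ℝ (Fin 2),
      (c 1 = 0 ∧ dist c p = dist c s ∧ r 0 < c 0) ∧
      ∀ c' : EuclideanSpace ℝ (Fin 2),
        c' 1 = 0 → dist c' p = dist c' s → c' = c := by
  have hden : p 0 - s 0 > 0 := by linarith
  set c0 : ℝ := (p 0 ^ 2 + p 1 ^ 2 - s 0 ^ 2 - s 1 ^ 2) / (2 * (p 0 - s 0)) with hc0
  refine ⟨(show EuclideanSpace ℝ (Fin 2) from !₂[c0, 0]), ⟨rfl, ?_, ?_⟩, ?_⟩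
  · rw [dist_eq_iff_sq, dist_sq_two, dist_sq_two]
    show (c0 - p 0) ^ 2 + (0 - p 1) ^ 2 = (c0 - s 0) ^ 2 + (0 - s 1) ^ 2
    rw [hc0]
    field_simp [hden.ne']
    ring
  · show r 0 < c0
    have hsq : dist r s ^ 2 < dist r p ^ 2 := by
      apply pow_lt_pow_left₀ hsd dist_nonneg
      norm_num
    rw [dist_sq_two, dist_sq_two, hr] at hsq
    rw [hc0, lt_div_iff₀ (by positivity)]
    nlinarith
  · intro c' h1 h2
    rw [dist_eq_iff_sq, dist_sq_two, dist_sq_two, h1] at h2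
    have : c' 0 = c0 := by
      rw [hc0, eq_div_iff (by positivity)]
      nlinarith
    ext i
    fin_cases i
    · exact this
    · exact h1
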